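/- Let v_1, ..., v_p be vectors in ℝⁿ with ‖v_j‖₂ ≤ b for all j, and let y = Σ_{j=1}^p γ_j v_j with γ_j ≥ 0 and Σ_j γ_j ≤ 1. Then for every positive integer K there exist non-negative integers m_1, ..., m_p with Σ_{j=1}^p m_j ≤ K such that ‖y − Σ_{j=1}^p (m_j/K) v_j‖₂² ≤ b²/K. -/

import Mathlib

open Finset

lemma maurey_exists_le {ι : Type*} [Fintype ι] (w f : ι → ℝ) (hw : ∀ i, 0 ≤ w i)
    (hw1 : ∑ i, w i = 1) (B : ℝ) (h : ∑ i, w i * f i ≤ B) :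
    ∃ i, 0 < w i ∧ f i ≤ B := by
  by_contra hc
  push_neg at hc
  obtain ⟨i₀, hi₀⟩ : ∃ i, 0 < w i := by
    by_contra hall
    push_neg at hall
    have : ∀ i, w i = 0 := fun i => le_antisymm (hall i) (hw i)
    simp [this] at hw1
  have hle : ∀ i ∈ Finset.univ, w i * B ≤ w i * f i := by
    intro i _
    rcases eq_or_lt_of_le (hw i) with h0 | h0
    · simp [← h0]
    · exact le_of_lt (mul_lt_mul_of_pos_left (hc i h0) h0)
  have hstrict : w i₀ * B < w i₀ * f i₀ := mul_lt_mul_of_pos_left (hc i₀ hi₀) hi₀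
  have : ∑ i, w i * B < ∑ i, w i * f i :=
    Finset.sum_lt_sum hle ⟨i₀, Finset.mem_univ i₀, hstrict⟩
  rw [← Finset.sum_mul, hw1, one_mul] at this
  linarith

lemma maurey_norm_sq (n : ℕ) (x : EuclideanSpace ℝ (Fin n)) : ‖x‖ ^ 2 = ∑ i, x i ^ 2 := by
  rw [EuclideanSpace.norm_eq, Real.sq_sqrt (by positivity)]
  simp [Real.norm_eq_abs, sq_abs]

theorem maurey_corollary (n p : ℕ) (b : ℝ) (v : Fin p → Fin n → ℝ)
    (hv : ∀ j, Real.sqrt (∑ i, (v j i) ^ 2) ≤ b)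
    (γ : Fin p → ℝ) (hγ0 : ∀ j, 0 ≤ γ j) (hγ1 : ∑ j, γ j ≤ 1)
    (y : Fin n → ℝ) (hy : y = fun i => ∑ j, γ j * v j i)
    (K : ℕ) (hK : 0 < K) :
    ∃ m : Fin p → ℕ, (∑ j, m j ≤ K) ∧
      ∑ i, (y i - ∑ j, ((m j : ℝ) / K) * v j i) ^ 2 ≤ b ^ 2 / K := by
  classical
  set V : Fin p → EuclideanSpace ℝ (Fin n) := fun j => WithLp.toLp 2 (v j) with hV
  set Y : EuclideanSpace ℝ (Fin n) := WithLp.toLp 2 y with hYdef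
  have hVb : ∀ j, ‖V j‖ ^ 2 ≤ b ^ 2 := by
    intro j
    rw [maurey_norm_sq]
    have hs : (0:ℝ) ≤ ∑ i, v j i ^ 2 := by positivity
    have h1 := hv j
    nlinarith [Real.sq_sqrt hs, Real.sqrt_nonneg (∑ i, v j i ^ 2)]
  have happly : ∀ (c : Fin p → ℝ) (i : Fin n),
      (∑ j, c j • V j) i = ∑ j, c j * v j i :=
    fun c i => by simp [hV]
  have hYsum : Y = ∑ j, γ j • V j := by
    ext i
    rw [happly]
    exact congrFun hy i
  have key : ∀ t : ℕ, ∃ m : Fin p → ℕ, (∑ j, m j ≤ t) ∧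
      ‖(t : ℝ) • Y - ∑ j, (m j : ℝ) • V j‖ ^ 2 ≤ t * b ^ 2 := by
    intro t
    induction t with
    | zero => exact ⟨0, by simp, by simp⟩
    | succ t ih =>
      obtain ⟨m, hm, hbound⟩ := ih
      set S : EuclideanSpace ℝ (Fin n) := ∑ j, (m j : ℝ) • V j with hS
      set c : EuclideanSpace ℝ (Fin n) := ((t : ℝ) + 1) • Y - S with hc
      have hγsum0 : (0:ℝ) ≤ 1 - ∑ j, γ j := by linarith
      have hinner : (inner ℝ c Y : ℝ) = ∑ j, γ j * inner ℝ c (V j) := by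
        rw [hYsum, inner_sum]
        exact Finset.sum_congr rfl fun j _ => real_inner_smul_right c (V j) (γ j)
      have hsum : ∑ j, γ j * ‖c - V j‖ ^ 2
          = (∑ j, γ j) * ‖c‖ ^ 2 - 2 * inner ℝ c Y + ∑ j, γ j * ‖V j‖ ^ 2 := by
        have e : ∀ j ∈ Finset.univ, γ j * ‖c - V j‖ ^ 2
            = γ j * ‖c‖ ^ 2 - 2 * (γ j * inner ℝ c (V j)) + γ j * ‖V j‖ ^ 2 := by
          intro j _
          rw [norm_sub_sq_real]
          ring
        rw [Finset.sum_congr rfl e, Finset.sum_add_distrib, Finset.sum_sub_distrib,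
          ← Finset.sum_mul, ← Finset.mul_sum, hinner]
      have hVsum : ∑ j, γ j * ‖V j‖ ^ 2 ≤ b ^ 2 := by
        calc ∑ j, γ j * ‖V j‖ ^ 2 ≤ ∑ j, γ j * b ^ 2 :=
              Finset.sum_le_sum fun j _ => mul_le_mul_of_nonneg_left (hVb j) (hγ0 j)
          _ = (∑ j, γ j) * b ^ 2 := by rw [Finset.sum_mul]
          _ ≤ 1 * b ^ 2 := mul_le_mul_of_nonneg_right hγ1 (by positivity)
          _ = b ^ 2 := one_mul _
      have hcY : c - Y = (t : ℝ) • Y - S := by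
        rw [hc]
        module
      have hexp : (1 - ∑ j, γ j) * ‖c‖ ^ 2 + ∑ j, γ j * ‖c - V j‖ ^ 2
          ≤ ((t : ℝ) + 1) * b ^ 2 := by
        rw [hsum]
        have h1 : ‖c - Y‖ ^ 2 = ‖c‖ ^ 2 - 2 * inner ℝ c Y + ‖Y‖ ^ 2 :=
          norm_sub_sq_real c Y
        have h2 : ‖c - Y‖ ^ 2 ≤ (t : ℝ) * b ^ 2 := by rw [hcY]; exact hbound
        nlinarith [sq_nonneg ‖Y‖]
      -- pigeonhole over Option (Fin p)
      set w : Option (Fin p) → ℝ := fun o => o.elim (1 - ∑ j, γ j) γ with hw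
      set f : Option (Fin p) → ℝ := fun o => ‖c - o.elim 0 V‖ ^ 2 with hf
      have hwpos : ∀ o, 0 ≤ w o := by
        intro o; cases o with
        | none => exact hγsum0
        | some j => exact hγ0 j
      have hw1 : ∑ o, w o = 1 := by
        rw [Fintype.sum_option]
        simp [hw]
      have hsf : ∑ o, w o * f o ≤ ((t : ℝ) + 1) * b ^ 2 := by
        rw [Fintype.sum_option]
        simpa [hw, hf] using hexp
      obtain ⟨o, -, ho⟩ := maurey_exists_le w f hwpos hw1 _ hsf
      cases o with
      | none =>
        refine ⟨m, le_trans hm (Nat.le_succ t), ?_⟩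
        have : ((t + 1 : ℕ) : ℝ) • Y - S = c - (0 : EuclideanSpace ℝ (Fin n)) := by
          rw [hc]; push_cast; module
        rw [hS] at this
        rw [this]
        simpa [hf] using ho.trans_eq (by norm_cast)
      | some j =>
        refine ⟨fun k => m k + if k = j then 1 else 0, ?_, ?_⟩
        · rw [Finset.sum_add_distrib]
          simp [hm, Nat.add_le_add hm (le_refl 1)]
        · have hS' : (∑ k, ((m k + if k = j then 1 else 0 : ℕ) : ℝ) • V k) = S + V j := by
            rw [hS]
            push_cast
            simp [add_smul, ite_smul, Finset.sum_add_distrib, Finset.sum_ite_eq']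
          have : ((t + 1 : ℕ) : ℝ) • Y - (∑ k, ((m k + if k = j then 1 else 0 : ℕ) : ℝ) • V k)
              = c - V j := by
            rw [hS', hc]; push_cast; module
          rw [this]
          simpa [hf] using ho.trans_eq (by norm_cast)
  obtain ⟨m, hm, hb⟩ := key K
  refine ⟨m, hm, ?_⟩
  have hKpos : (0:ℝ) < K := by exact_mod_cast hK
  have heq : ∀ i : Fin n, y i - ∑ j, ((m j : ℝ) / K) * v j i
      = (K : ℝ)⁻¹ * (((K : ℝ) • Y - ∑ j, (m j : ℝ) • V j) i) := by
    intro i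
    have h1 : (((K : ℝ) • Y - ∑ j, (m j : ℝ) • V j) i)
        = (K : ℝ) * y i - ∑ j, (m j : ℝ) * v j i := by
      rw [PiLp.sub_apply, PiLp.smul_apply, happly]
      rfl
    rw [h1, mul_sub, ← mul_assoc, inv_mul_cancel₀ (ne_of_gt hKpos), one_mul,
      Finset.mul_sum]
    congr 1
    exact Finset.sum_congr rfl fun j _ => by ring
  rw [Finset.sum_congr rfl fun i _ => by rw [heq i]]
  have h2 : ∑ i, ((K : ℝ)⁻¹ * (((K : ℝ) • Y - ∑ j, (m j : ℝ) • V j) i)) ^ 2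
      = (K : ℝ)⁻¹ ^ 2 * ‖(K : ℝ) • Y - ∑ j, (m j : ℝ) • V j‖ ^ 2 := by
    rw [maurey_norm_sq, Finset.mul_sum]
    exact Finset.sum_congr rfl fun i _ => by ring
  rw [h2]
  calc (K : ℝ)⁻¹ ^ 2 * ‖(K : ℝ) • Y - ∑ j, (m j : ℝ) • V j‖ ^ 2
      ≤ (K : ℝ)⁻¹ ^ 2 * ((K : ℝ) * b ^ 2) := by
        apply mul_le_mul_of_nonneg_left _ (by positivity)
        exact_mod_cast hb
    _ = b ^ 2 / K := by field_simp
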